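/- Canonical (term) model theorem: let T_m be a maximally consistent theory in a first-order language L that has the Henkin witness property. Then there exists an L-structure 𝔄 such that for every L-sentence α, 𝔄 ⊨ α if and only if T_m ⊢ α. -/

import Mathlib

open FirstOrder FirstOrder.Language

universe u v w

namespace NDFOL

variable {L : FirstOrder.Language.{u, v}}

/-- Instantiate the (single) bound variable of a bounded formula by a term,
yielding a formula. -/
def inst (ψ : L.BoundedFormula ℕ 1) (t : L.Term ℕ) : L.Formula ℕ :=
  ψ.toFormula.subst (Sum.elim Term.var fun _ => t)

/-- The natural deduction proof system for first-order logic, with the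
introduction and elimination rules for `¬`, `∧`, `∨`, `→`, `↔`, `∀`, `∃`,
reiteration (weakening), and the usual rules for equality. -/
inductive ND : Set (L.Formula ℕ) → L.Formula ℕ → Prop
  | hyp {Γ : Set (L.Formula ℕ)} {φ : L.Formula ℕ} : φ ∈ Γ → ND Γ φ
  /-- Reiteration: anything derivable remains derivable with more hypotheses. -/
  | reiterate {Γ Γ' : Set (L.Formula ℕ)} {φ : L.Formula ℕ} :
      Γ ⊆ Γ' → ND Γ φ → ND Γ' φ
  /-- Negation introduction (reductio ad absurdum). -/
  | notI {Γ : Set (L.Formula ℕ)} {φ : L.Formula ℕ} :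
      ND (insert φ Γ) ⊥ → ND Γ (∼φ)
  /-- Negation elimination (double negation elimination). -/
  | notE {Γ : Set (L.Formula ℕ)} {φ : L.Formula ℕ} :
      ND Γ (∼∼φ) → ND Γ φ
  /-- A contradiction yields falsum. -/
  | botI {Γ : Set (L.Formula ℕ)} {φ : L.Formula ℕ} :
      ND Γ φ → ND Γ (∼φ) → ND Γ ⊥
  | andI {Γ : Set (L.Formula ℕ)} {φ ψ : L.Formula ℕ} :
      ND Γ φ → ND Γ ψ → ND Γ (φ ⊓ ψ)
  | andE₁ {Γ : Set (L.Formula ℕ)} {φ ψ : L.Formula ℕ} :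
      ND Γ (φ ⊓ ψ) → ND Γ φ
  | andE₂ {Γ : Set (L.Formula ℕ)} {φ ψ : L.Formula ℕ} :
      ND Γ (φ ⊓ ψ) → ND Γ ψ
  | orI₁ {Γ : Set (L.Formula ℕ)} {φ ψ : L.Formula ℕ} :
      ND Γ φ → ND Γ (φ ⊔ ψ)
  | orI₂ {Γ : Set (L.Formula ℕ)} {φ ψ : L.Formula ℕ} :
      ND Γ ψ → ND Γ (φ ⊔ ψ)
  | orE {Γ : Set (L.Formula ℕ)} {φ ψ χ : L.Formula ℕ} :
      ND Γ (φ ⊔ ψ) → ND Γ (φ ⟹ χ) → ND Γ (ψ ⟹ χ) → ND Γ χ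
  | impI {Γ : Set (L.Formula ℕ)} {φ ψ : L.Formula ℕ} :
      ND (insert φ Γ) ψ → ND Γ (φ ⟹ ψ)
  /-- Modus ponens. -/
  | impE {Γ : Set (L.Formula ℕ)} {φ ψ : L.Formula ℕ} :
      ND Γ (φ ⟹ ψ) → ND Γ φ → ND Γ ψ
  | iffI {Γ : Set (L.Formula ℕ)} {φ ψ : L.Formula ℕ} :
      ND Γ (φ ⟹ ψ) → ND Γ (ψ ⟹ φ) → ND Γ (φ ⇔ ψ)
  | iffE₁ {Γ : Set (L.Formula ℕ)} {φ ψ : L.Formula ℕ} :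
      ND Γ (φ ⇔ ψ) → ND Γ (φ ⟹ ψ)
  | iffE₂ {Γ : Set (L.Formula ℕ)} {φ ψ : L.Formula ℕ} :
      ND Γ (φ ⇔ ψ) → ND Γ (ψ ⟹ φ)
  /-- Universal introduction: from `φ(x)` for a variable `x` that is not free
  in the hypotheses nor in `∀ φ`, conclude `∀ φ`. -/
  | allI {Γ : Set (L.Formula ℕ)} {ψ : L.BoundedFormula ℕ 1} {x : ℕ} :
      (∀ γ ∈ Γ, x ∉ γ.freeVarFinset) → x ∉ (∀'ψ).freeVarFinset →
      ND Γ (inst ψ (Term.var x)) → ND Γ (∀'ψ)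
  /-- Universal elimination (instantiation at any term `t`). -/
  | allE {Γ : Set (L.Formula ℕ)} {ψ : L.BoundedFormula ℕ 1} (t : L.Term ℕ) :
      ND Γ (∀'ψ) → ND Γ (inst ψ t)
  /-- Existential introduction. -/
  | exI {Γ : Set (L.Formula ℕ)} {ψ : L.BoundedFormula ℕ 1} (t : L.Term ℕ) :
      ND Γ (inst ψ t) → ND Γ (∃'ψ)
  /-- Existential elimination, with a fresh variable `x`. -/
  | exE {Γ : Set (L.Formula ℕ)} {χ : L.Formula ℕ} {ψ : L.BoundedFormula ℕ 1} {x : ℕ} :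
      (∀ γ ∈ Γ, x ∉ γ.freeVarFinset) → x ∉ (∃'ψ).freeVarFinset →
      x ∉ χ.freeVarFinset →
      ND Γ (∃'ψ) → ND (insert (inst ψ (Term.var x)) Γ) χ → ND Γ χ
  /-- Reflexivity of equality. -/
  | eqRefl {Γ : Set (L.Formula ℕ)} (t : L.Term ℕ) : ND Γ (Term.equal t t)
  /-- Substitution of provably equal terms. -/
  | eqSubst {Γ : Set (L.Formula ℕ)} {ψ : L.BoundedFormula ℕ 1} {t s : L.Term ℕ} :
      ND Γ (Term.equal t s) → ND Γ (inst ψ t) → ND Γ (inst ψ s)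

/-- A sentence, viewed as a formula with (no) free variables among `ℕ`. -/
def sentenceToFormula (φ : L.Sentence) : L.Formula ℕ :=
  φ.relabel (Empty.elim : Empty → ℕ)

/-- Derivability of a sentence from a set of sentences in the natural
deduction proof system. -/
def SDeriv (Γ : Set L.Sentence) (φ : L.Sentence) : Prop :=
  ND (sentenceToFormula '' Γ) (sentenceToFormula φ)

/-- Instantiate the (single) bound variable of a bounded formula (with no free
variables) by a closed term, yielding a sentence. -/
def instS (ψ : L.BoundedFormula Empty 1) (t : L.Term Empty) : L.Sentence :=
  ψ.toFormula.subst (Sum.elim Term.var fun _ => t)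

/-- A set of sentences is consistent if it does not derive `⊥`. -/
def Consistent (Γ : Set L.Sentence) : Prop :=
  ¬ SDeriv Γ ⊥

/-- A theory (in the sense of van Dalen) is a set of sentences closed under
derivability. -/
def IsTheory (T : Set L.Sentence) : Prop :=
  ∀ φ : L.Sentence, SDeriv T φ → φ ∈ T

/-- A maximally consistent theory: a consistent theory such that every theory
strictly containing it is inconsistent. -/
def MaximallyConsistent (T : Set L.Sentence) : Prop :=
  IsTheory T ∧ Consistent T ∧
    ∀ T' : Set L.Sentence, IsTheory T' → T ⊂ T' → ¬ Consistent T'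

end NDFOL

namespace NDFOL
section Toolkit

open FirstOrder FirstOrder.Language FirstOrder.Language.BoundedFormula

variable {L : FirstOrder.Language.{u, v}} {α : Type*} {β : Type*} {γ : Type*}

/-! ### Term lemmas -/

theorem term_subst_var (t : L.Term α) : t.subst Term.var = t := by
  induction t with
  | var => rfl
  | func f ts ih => simp only [Term.subst]; exact congrArg _ (funext fun i => ih i)

theorem term_subst_relabel (g : α → β) (σ : β → L.Term γ) (t : L.Term α) :
    (t.relabel g).subst σ = t.subst (σ ∘ g) := by
  induction t with
  | var => rfl
  | func f ts ih => simp only [Term.relabel, Term.subst]; exact congrArg _ (funext fun i => ih i)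

theorem term_subst_subst (f : α → L.Term β) (g : β → L.Term γ) (t : L.Term α) :
    (t.subst f).subst g = t.subst (fun a => (f a).subst g) := by
  induction t with
  | var => rfl
  | func F ts ih => simp only [Term.subst]; exact congrArg _ (funext fun i => ih i)

theorem term_relabel_eq_subst (g : α → β) (t : L.Term α) :
    t.relabel g = t.subst (Term.var ∘ g) := by
  induction t with
  | var => rfl
  | func F ts ih => simp only [Term.relabel, Term.subst]; exact congrArg _ (funext fun i => ih i)

theorem term_relabel_subst (f : α → L.Term β) (g : β → γ) (t : L.Term α) :
    (t.subst f).relabel g = t.subst (fun a => (f a).relabel g) := by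
  induction t with
  | var => rfl
  | func F ts ih => simp only [Term.relabel, Term.subst]; exact congrArg _ (funext fun i => ih i)

/-- Any two substitutions on a closed term agree (with any relabelling). -/
theorem closed_term_subst (t : L.Term Empty) (f : Empty → L.Term β) (g : Empty → β) :
    t.subst f = t.relabel g := by
  induction t with
  | var e => exact e.elim
  | func F ts ih => simp only [Term.relabel, Term.subst]; exact congrArg _ (funext fun i => ih i)

theorem closed_term_relabel (t : L.Term Empty) (f g : Empty → β) :
    t.relabel f = t.relabel g := by
  rw [term_relabel_eq_subst, closed_term_subst]

theorem closed_term_subst_eq (t : L.Term Empty) (f g : Empty → L.Term β) :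
    t.subst f = t.subst g := by
  rw [closed_term_subst t f (fun e => e.elim), closed_term_subst t g (fun e => e.elim)]

/-! ### A closed-form simultaneous substitution operator -/

/-- Lift a substitution map under a binder. -/
def liftSub {n k : ℕ} (f : (α ⊕ Fin n) → L.Term (β ⊕ Fin k)) :
    (α ⊕ Fin (n + 1)) → L.Term (β ⊕ Fin (k + 1)) :=
  Sum.elim (fun a => (f (Sum.inl a)).relabel (Sum.map id Fin.castSucc))
    (Fin.snoc (fun i => (f (Sum.inr i)).relabel (Sum.map id Fin.castSucc))
      (Term.var (Sum.inr (Fin.last k))))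

/-- Simultaneous substitution of all (free and bound) variables of a bounded formula,
capture-avoiding. -/
def bsub : ∀ {n k : ℕ}, L.BoundedFormula α n → ((α ⊕ Fin n) → L.Term (β ⊕ Fin k)) →
    L.BoundedFormula β k
  | _, _, .falsum, _ => .falsum
  | _, _, .equal t₁ t₂, f => .equal (t₁.subst f) (t₂.subst f)
  | _, _, .rel R ts, f => .rel R (fun i => (ts i).subst f)
  | _, _, .imp φ ψ, f => (bsub φ f).imp (bsub ψ f)
  | _, _, .all φ, f => (bsub φ (liftSub f)).all

theorem bsub_congr {n k : ℕ} (φ : L.BoundedFormula α n)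
    {f g : (α ⊕ Fin n) → L.Term (β ⊕ Fin k)} (h : f = g) : bsub φ f = bsub φ g := by rw [h]

theorem liftSub_var {n : ℕ} :
    liftSub (Term.var : (α ⊕ Fin n) → L.Term (α ⊕ Fin n)) = Term.var := by
  funext x
  cases x with
  | inl a => rfl
  | inr i =>
    refine Fin.lastCases ?_ (fun j => ?_) i
    · simp [liftSub, Fin.snoc_last]
    · simp [liftSub, Fin.snoc_castSucc]

theorem bsub_var : ∀ {n : ℕ} (φ : L.BoundedFormula α n), bsub φ Term.var = φ
  | _, .falsum => rfl
  | _, .equal t₁ t₂ => by simp [bsub, term_subst_var]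
  | _, .rel R ts => by simp [bsub, term_subst_var]
  | _, .imp φ ψ => by simp [bsub, bsub_var φ, bsub_var ψ]
  | _, .all φ => by rw [bsub, liftSub_var, bsub_var φ]

theorem liftSub_comp {n k k' : ℕ} (f : (α ⊕ Fin n) → L.Term (β ⊕ Fin k))
    (g : (β ⊕ Fin k) → L.Term (γ ⊕ Fin k')) :
    (fun x => (liftSub f x).subst (liftSub g)) = liftSub (fun x => (f x).subst g) := by
  have key : ∀ t : L.Term (β ⊕ Fin k),
      (t.relabel (Sum.map id Fin.castSucc)).subst (liftSub g)
        = (t.subst g).relabel (Sum.map id Fin.castSucc) := by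
    intro t
    rw [term_subst_relabel, term_relabel_subst]
    refine congrArg _ (funext fun y => ?_)
    cases y with
    | inl b => rfl
    | inr j => simp [liftSub, Function.comp, Fin.snoc_castSucc]
  funext x
  cases x with
  | inl a => simp only [liftSub, Sum.elim_inl]; exact key _
  | inr i =>
    refine Fin.lastCases ?_ (fun j => ?_) i
    · simp [liftSub, Fin.snoc_last, Term.subst]
    · simp only [liftSub, Sum.elim_inr, Fin.snoc_castSucc]
      exact key _

theorem bsub_bsub : ∀ {n k k' : ℕ} (φ : L.BoundedFormula α n)
    (f : (α ⊕ Fin n) → L.Term (β ⊕ Fin k)) (g : (β ⊕ Fin k) → L.Term (γ ⊕ Fin k')),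
    bsub (bsub φ f) g = bsub φ (fun x => (f x).subst g)
  | _, _, _, .falsum, _, _ => rfl
  | _, _, _, .equal t₁ t₂, f, g => by simp [bsub, term_subst_subst]
  | _, _, _, .rel R ts, f, g => by simp [bsub, term_subst_subst]
  | _, _, _, .imp φ ψ, f, g => by simp [bsub, bsub_bsub φ f g, bsub_bsub ψ f g]
  | _, _, _, .all φ, f, g => by
    rw [bsub, bsub, bsub, bsub_bsub φ (liftSub f) (liftSub g), liftSub_comp]

end Toolkit

section Congr
open FirstOrder FirstOrder.Language
variable {L : FirstOrder.Language.{u, v}} {α : Type*} {β : Type*}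

theorem term_relabel_congr {f g : α → β} (t : L.Term α) (h : ∀ y, f y = g y) :
    t.relabel f = t.relabel g := by rw [funext h]

theorem term_subst_congr {f g : α → L.Term β} (t : L.Term α) (h : ∀ y, f y = g y) :
    t.subst f = t.subst g := by rw [funext h]

end Congr
section Bridge

open FirstOrder FirstOrder.Language FirstOrder.Language.BoundedFormula

variable {L : FirstOrder.Language.{u, v}} {α : Type*} {β : Type*} {γ : Type*}

theorem snoc_fin_one {X : Type*} (h : Fin 0 → X) (x : X) (j : Fin (0 + 1)) :
    (Fin.snoc h x : Fin (0+1) → X) j = x := by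
  have : j = Fin.last 0 := Fin.ext (by omega)
  rw [this, Fin.snoc_last]

theorem fin_castAdd_succ {p m : ℕ} (pj : Fin p) :
    (Fin.castAdd (m+1) pj) = Fin.castSucc (Fin.castAdd m pj) := Fin.ext (by simp)

theorem fin_natAdd_last {p m : ℕ} : Fin.natAdd p (Fin.last m) = Fin.last (p+m) :=
  Fin.ext (by simp)

theorem fin_natAdd_castSucc {p m : ℕ} (i : Fin m) :
    Fin.natAdd p (Fin.castSucc i) = Fin.castSucc (Fin.natAdd p i) := Fin.ext (by simp)

theorem relabelAux_inl {p : ℕ} (q : α → β ⊕ Fin p) (m : ℕ) (a : α) :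
    relabelAux q m (Sum.inl a) = Sum.map id (Fin.castAdd m) (q a) := by
  cases h : q a <;> simp [relabelAux, h]

theorem relabelAux_inr {p : ℕ} (q : α → β ⊕ Fin p) (m : ℕ) (i : Fin m) :
    relabelAux q m (Sum.inr i) = Sum.inr (Fin.natAdd p i) := by
  simp [relabelAux]

theorem liftSub_inl {n k : ℕ} (f : (α ⊕ Fin n) → L.Term (β ⊕ Fin k)) (a : α) :
    liftSub f (Sum.inl a) = (f (Sum.inl a)).relabel (Sum.map id Fin.castSucc) := rfl

theorem liftSub_snoc_castSucc {n k : ℕ} (f : (α ⊕ Fin n) → L.Term (β ⊕ Fin k)) (i : Fin n) :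
    liftSub f (Sum.inr i.castSucc) = (f (Sum.inr i)).relabel (Sum.map id Fin.castSucc) := by
  simp [liftSub, Fin.snoc_castSucc]

theorem liftSub_snoc_last {n k : ℕ} (f : (α ⊕ Fin n) → L.Term (β ⊕ Fin k)) :
    liftSub f (Sum.inr (Fin.last n)) = Term.var (Sum.inr (Fin.last k)) := by
  simp [liftSub, Fin.snoc_last]

/-- `BoundedFormula.subst` as a `bsub`. -/
theorem subst_eq_bsub : ∀ {n : ℕ} (φ : L.BoundedFormula α n) (σ : α → L.Term β),
    φ.subst σ = bsub φ (Sum.elim (Term.relabel Sum.inl ∘ σ) (Term.var ∘ Sum.inr))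
  | _, .falsum, _ => rfl
  | _, .equal t₁ t₂, σ => rfl
  | _, .rel R ts, σ => rfl
  | _, .imp φ ψ, σ => by
    show (φ.subst σ).imp (ψ.subst σ) = _
    rw [subst_eq_bsub φ σ, subst_eq_bsub ψ σ]; rfl
  | _, .all φ, σ => by
    show ((φ.subst σ)).all = (bsub φ (liftSub _)).all
    rw [subst_eq_bsub φ σ]
    refine congrArg _ (bsub_congr φ (funext fun x => ?_))
    cases x with
    | inl a =>
      simp only [Sum.elim_inl, liftSub, Function.comp_apply, Term.relabel_relabel]
      exact term_relabel_congr (σ a) (fun y => rfl)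
    | inr i =>
      refine Fin.lastCases ?_ (fun j => ?_) i
      · simp [liftSub, Fin.snoc_last]
      · simp only [Sum.elim_inr, Function.comp_apply, liftSub, Fin.snoc_castSucc,
          Term.relabel]
        rfl

/-- `BoundedFormula.relabel` followed by `bsub`. -/
theorem relabel_bsub {p : ℕ} (q : α → β ⊕ Fin p) :
    ∀ {j k' : ℕ} (ψ : L.BoundedFormula α j) (g : (β ⊕ Fin (p + j)) → L.Term (γ ⊕ Fin k')),
    bsub (ψ.relabel q) g = bsub ψ (g ∘ relabelAux q j)
  | _, _, .falsum, _ => rfl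
  | _, _, .equal t₁ t₂, g => by
    show BoundedFormula.equal ((t₁.relabel (relabelAux q _)).subst g) _ = _
    simp [bsub, term_subst_relabel]
  | _, _, .rel R ts, g => by
    show BoundedFormula.rel R (fun i => ((ts i).relabel (relabelAux q _)).subst g) = _
    simp [bsub, term_subst_relabel]
  | _, _, .imp φ ψ, g => by
    rw [relabel_imp, bsub, relabel_bsub q φ g, relabel_bsub q ψ g]; rfl
  | _, _, .all φ, g => by
    rw [relabel_all, bsub, bsub, relabel_bsub q φ (liftSub g)]
    refine congrArg _ (bsub_congr φ (funext fun x => ?_))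
    cases x with
    | inl a =>
      cases h : q a with
      | inl b =>
        simp only [Function.comp_apply, relabelAux_inl, h, Sum.map_inl, id_eq, liftSub_inl,
          Sum.elim_inl]
      | inr pj =>
        simp only [Function.comp_apply, relabelAux_inl, h, Sum.map_inr, id_eq, liftSub_inl,
          Sum.elim_inl]
        exact liftSub_snoc_castSucc g (Fin.castAdd _ pj)
    | inr i =>
      refine Fin.lastCases ?_ (fun i₀ => ?_) i
      · simp only [Function.comp_apply, relabelAux_inr, fin_natAdd_last]
        exact (liftSub_snoc_last g).trans (liftSub_snoc_last _).symm
      · simp only [Function.comp_apply, relabelAux_inr, fin_natAdd_castSucc]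
        refine (liftSub_snoc_castSucc g (Fin.natAdd p i₀)).trans ?_
        refine Eq.trans ?_ (liftSub_snoc_castSucc _ i₀).symm
        simp only [Function.comp_apply, relabelAux_inr]

/-- `toFormula` is invisible to `bsub`. -/
theorem toFormula_bsub : ∀ {n k : ℕ} (χ : L.BoundedFormula α n)
    (f : (α ⊕ Fin n) → L.Term (β ⊕ Fin k)),
    bsub (χ.toFormula) (Sum.elim f Fin.elim0) = bsub χ f
  | _, _, .falsum, _ => rfl
  | _, _, .equal t₁ t₂, f => by
    show BoundedFormula.equal ((t₁.relabel Sum.inl).subst _) ((t₂.relabel Sum.inl).subst _) = _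
    rw [term_subst_relabel, term_subst_relabel]; rfl
  | _, _, .rel R ts, f => by
    show BoundedFormula.rel R (fun i => ((ts i).relabel Sum.inl).subst _) = _
    refine congrArg _ (funext fun i => ?_)
    rw [term_subst_relabel]; rfl
  | _, _, .imp φ ψ, f => by
    show ((bsub φ.toFormula _).imp (bsub ψ.toFormula _)) = _
    rw [toFormula_bsub φ f, toFormula_bsub ψ f]; rfl
  | _, _, .all φ, f => by
    have h0 : bsub ((BoundedFormula.all φ).toFormula) (Sum.elim f Fin.elim0)
        = (bsub (BoundedFormula.relabel
            (Sum.elim (Sum.inl ∘ Sum.inl) (Sum.map Sum.inr id ∘ finSumFinEquiv.symm))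
            φ.toFormula) (liftSub (Sum.elim f Fin.elim0))).all := rfl
    have h1 : bsub (BoundedFormula.all φ) f = (bsub φ (liftSub f)).all := rfl
    rw [h0, h1, relabel_bsub, ← toFormula_bsub φ (liftSub f)]
    refine congrArg _ (bsub_congr _ (funext fun x => ?_))
    cases x with
    | inr i => exact i.elim0
    | inl y =>
      simp only [Function.comp_apply, relabelAux_inl]
      cases y with
      | inl a => rfl
      | inr i =>
        refine Fin.lastCases ?_ (fun i₀ => ?_) i
        · simp only [Sum.elim_inr, Function.comp_apply, finSumFinEquiv_symm_last,
            Sum.map_inr, id_eq, Sum.map_inl, Sum.elim_inl]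
          exact (liftSub_snoc_last (Sum.elim f Fin.elim0)).trans (liftSub_snoc_last f).symm
        · rw [show Fin.castSucc i₀ = Fin.castAdd 1 i₀ from rfl]
          simp only [Sum.elim_inr, Function.comp_apply, finSumFinEquiv_symm_apply_castAdd,
            Sum.map_inl, Sum.elim_inl, id_eq]
          exact Eq.trans (by rfl) (liftSub_snoc_castSucc f i₀).symm

end Bridge
section Canon

open FirstOrder FirstOrder.Language FirstOrder.Language.BoundedFormula

variable {L : FirstOrder.Language.{u, v}}

theorem empty_fin0_map_eq {X : Type*} (f g : Empty ⊕ Fin 0 → X) : f = g :=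
  funext fun x => by cases x with
    | inl e => exact e.elim
    | inr i => exact i.elim0

/-- The canonical empty substitution. -/
def m0 : Empty ⊕ Fin 0 → L.Term (ℕ ⊕ Fin 0) :=
  Sum.elim (fun e => e.elim) (fun i => i.elim0)

theorem stf_eq_bsub (A : L.Sentence) (m : Empty ⊕ Fin 0 → L.Term (ℕ ⊕ Fin 0)) :
    sentenceToFormula A = bsub A m := by
  have h : sentenceToFormula A
      = bsub (BoundedFormula.relabel (Sum.inl ∘ (Empty.elim : Empty → ℕ)) A) Term.var := by
    rw [bsub_var]; rfl
  rw [h, relabel_bsub]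
  exact bsub_congr _ (empty_fin0_map_eq _ _)

theorem stf_falsum : sentenceToFormula (⊥ : L.Sentence) = (⊥ : L.Formula ℕ) :=
  stf_eq_bsub _ m0

theorem stf_imp (A B : L.Sentence) :
    sentenceToFormula (A.imp B) = (sentenceToFormula A).imp (sentenceToFormula B) := by
  rw [stf_eq_bsub A m0, stf_eq_bsub B m0, stf_eq_bsub (A.imp B) m0]; rfl

theorem stf_not (A : L.Sentence) : sentenceToFormula (∼A) = ∼(sentenceToFormula A) := by
  rw [stf_eq_bsub A m0, stf_eq_bsub (∼A) m0]; rfl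

/-- Lift of a bounded formula with one variable to the `ℕ`-indexed world. -/
def nfb (χ : L.BoundedFormula Empty 1) : L.BoundedFormula ℕ 1 :=
  bsub χ (liftSub m0)

theorem stf_all (χ : L.BoundedFormula Empty 1) :
    sentenceToFormula (∀'χ) = ∀'(nfb χ) := by
  rw [stf_eq_bsub (∀'χ) m0]; rfl

theorem nfb_not (χ : L.BoundedFormula Empty 1) : nfb (∼χ) = ∼(nfb χ) := rfl

/-- `toFormula`-then-`subst` as a `bsub`; covers `inst` and `instS`. -/
theorem tfsubst_eq_bsub {δ : Type*} (ψ : L.BoundedFormula δ 1) (σ : δ ⊕ Fin 1 → L.Term δ) :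
    ψ.toFormula.subst σ = bsub ψ (fun x => (σ x).relabel Sum.inl) := by
  rw [subst_eq_bsub, ← toFormula_bsub ψ (fun x => (σ x).relabel Sum.inl)]
  refine bsub_congr _ (funext fun x => ?_)
  cases x with
  | inl y => rfl
  | inr i => exact i.elim0

theorem instS_eq_bsub (χ : L.BoundedFormula Empty 1) (t : L.Term Empty) :
    instS χ t = bsub χ (fun x =>
      ((Sum.elim Term.var (fun _ => t) : Empty ⊕ Fin 1 → L.Term Empty) x).relabel Sum.inl) :=
  tfsubst_eq_bsub χ _

theorem inst_eq_bsub (ψ : L.BoundedFormula ℕ 1) (t : L.Term ℕ) :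
    inst ψ t = bsub ψ (fun x =>
      ((Sum.elim Term.var (fun _ => t) : ℕ ⊕ Fin 1 → L.Term ℕ) x).relabel Sum.inl) :=
  tfsubst_eq_bsub ψ _

theorem inst_not (ψ : L.BoundedFormula ℕ 1) (t : L.Term ℕ) :
    inst (∼ψ) t = ∼(inst ψ t) := rfl

theorem instS_not (χ : L.BoundedFormula Empty 1) (t : L.Term Empty) :
    instS (∼χ) t = ∼(instS χ t) := rfl

theorem stf_instS (χ : L.BoundedFormula Empty 1) (t : L.Term Empty) :
    sentenceToFormula (instS χ t) = inst (nfb χ) (t.relabel Empty.elim) := by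
  rw [stf_eq_bsub _ m0, instS_eq_bsub, inst_eq_bsub, bsub_bsub, nfb, bsub_bsub]
  refine bsub_congr _ (funext fun x => ?_)
  cases x with
  | inl e => exact e.elim
  | inr i =>
    have h1 : liftSub (m0 (L := L)) (Sum.inr i) = Term.var (Sum.inr (Fin.last 0)) :=
      snoc_fin_one (fun j => ((m0 (L := L)) (Sum.inr j)).relabel (Sum.map id Fin.castSucc))
        (Term.var (Sum.inr (Fin.last 0))) i
    simp only [Sum.elim_inr, h1, Term.subst]
    rw [term_subst_relabel]
    rw [closed_term_subst t _ (Sum.inl ∘ Empty.elim), Term.relabel_relabel]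

theorem stf_equal (a b : L.Term Empty) :
    sentenceToFormula (Term.equal a b)
      = Term.equal (a.relabel Empty.elim) (b.relabel Empty.elim) := by
  rw [stf_eq_bsub _ m0]
  simp only [Term.equal, Term.bdEqual]
  show BoundedFormula.equal ((a.relabel Sum.inl).subst m0) ((b.relabel Sum.inl).subst m0) = _
  rw [term_subst_relabel, term_subst_relabel,
    closed_term_subst a _ (Sum.inl ∘ Empty.elim), closed_term_subst b _ (Sum.inl ∘ Empty.elim),
    ← Term.relabel_relabel, ← Term.relabel_relabel]

/-! ### Closedness of sentences -/

theorem not_mem_subst_varFinsetLeft {δ : Type*} {n k : ℕ} (t : L.Term (δ ⊕ Fin n))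
    (m : δ ⊕ Fin n → L.Term (ℕ ⊕ Fin k)) (hm : ∀ z (x : ℕ), x ∉ (m z).varFinsetLeft)
    (x : ℕ) : x ∉ (t.subst m).varFinsetLeft := by
  induction t with
  | var z => exact hm z x
  | func f ts ih =>
    simp only [Term.subst, Term.varFinsetLeft, Finset.mem_biUnion]
    rintro ⟨i, -, hmem⟩
    exact ih i hmem

theorem not_mem_relabel_up_varFinsetLeft {k k' : ℕ} (t : L.Term (ℕ ⊕ Fin k))
    (h : Fin k → Fin k') (hx : ∀ (x : ℕ), x ∉ t.varFinsetLeft) (x : ℕ) :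
    x ∉ (t.relabel (Sum.map id h)).varFinsetLeft := by
  induction t with
  | var z =>
    cases z with
    | inl a => exact hx x
    | inr i => simp [Term.relabel, Term.varFinsetLeft]
  | func f ts ih =>
    simp only [Term.relabel, Term.varFinsetLeft, Finset.mem_biUnion]
    rintro ⟨i, -, hmem⟩
    refine ih i (fun y => ?_) hmem
    intro hy
    have := hx y
    simp only [Term.varFinsetLeft, Finset.mem_biUnion] at this
    exact this ⟨i, Finset.mem_univ i, hy⟩

theorem liftSub_closed {n k : ℕ} (m : Empty ⊕ Fin n → L.Term (ℕ ⊕ Fin k))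
    (hm : ∀ z (x : ℕ), x ∉ (m z).varFinsetLeft) :
    ∀ z (x : ℕ), x ∉ (liftSub m z).varFinsetLeft := by
  intro z x
  cases z with
  | inl e => exact e.elim
  | inr i =>
    refine Fin.lastCases ?_ (fun i₀ => ?_) i
    · rw [liftSub_snoc_last]; simp [Term.varFinsetLeft]
    · rw [liftSub_snoc_castSucc]
      exact not_mem_relabel_up_varFinsetLeft _ _ (hm (Sum.inr i₀)) x

theorem bsub_closed : ∀ {n k : ℕ} (χ : L.BoundedFormula Empty n)
    (m : Empty ⊕ Fin n → L.Term (ℕ ⊕ Fin k)),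
    (∀ z (x : ℕ), x ∉ (m z).varFinsetLeft) → ∀ (x : ℕ), x ∉ (bsub χ m).freeVarFinset
  | _, _, .falsum, _, _, x => by simp [bsub, freeVarFinset]
  | _, _, .equal t₁ t₂, m, hm, x => by
    simp only [bsub, freeVarFinset, Finset.mem_union]
    rintro (h | h)
    · exact not_mem_subst_varFinsetLeft t₁ m hm x h
    · exact not_mem_subst_varFinsetLeft t₂ m hm x h
  | _, _, .rel R ts, m, hm, x => by
    simp only [bsub, freeVarFinset, Finset.mem_biUnion]
    rintro ⟨i, -, h⟩
    exact not_mem_subst_varFinsetLeft (ts i) m hm x h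
  | _, _, .imp φ ψ, m, hm, x => by
    simp only [bsub, freeVarFinset, Finset.mem_union]
    rintro (h | h)
    · exact bsub_closed φ m hm x h
    · exact bsub_closed ψ m hm x h
  | _, _, .all φ, m, hm, x =>
    bsub_closed φ (liftSub m) (liftSub_closed m hm) x

theorem m0_closed : ∀ (z : Empty ⊕ Fin 0) (x : ℕ), x ∉ ((m0 (L := L)) z).varFinsetLeft := by
  intro z
  cases z with
  | inl e => exact e.elim
  | inr i => exact i.elim0

theorem stf_closed (A : L.Sentence) (x : ℕ) :
    x ∉ (sentenceToFormula A).freeVarFinset := by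
  rw [stf_eq_bsub A m0]
  exact bsub_closed A m0 m0_closed x

end Canon
section NDLayer

open FirstOrder FirstOrder.Language FirstOrder.Language.BoundedFormula

variable {L : FirstOrder.Language.{u, v}}

theorem botE {Γ : Set (L.Formula ℕ)} {φ : L.Formula ℕ} (h : ND Γ ⊥) : ND Γ φ :=
  ND.notE (ND.notI (ND.reiterate (Set.subset_insert _ _) h))

/-- Cut over hypotheses that derive from a closed context. -/
theorem nd_cut {Δ Γg : Set (L.Formula ℕ)} (hg : ∀ δ ∈ Δ, ND Γg δ)
    (hclosed : ∀ γ ∈ Γg, ∀ x : ℕ, x ∉ γ.freeVarFinset) :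
    ∀ {Γf : Set (L.Formula ℕ)} {φ : L.Formula ℕ}, ND Γf φ → ND ((Γf \ Δ) ∪ Γg) φ := by
  have hins : ∀ (ψ : L.Formula ℕ) (Γ : Set (L.Formula ℕ)),
      ((insert ψ Γ) \ Δ) ∪ Γg ⊆ insert ψ ((Γ \ Δ) ∪ Γg) := by
    rintro ψ Γ x (⟨hx1, hx2⟩ | hx)
    · rcases hx1 with rfl | hx1
      · exact Set.mem_insert _ _
      · exact Set.mem_insert_of_mem _ (Or.inl ⟨hx1, hx2⟩)
    · exact Set.mem_insert_of_mem _ (Or.inr hx)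
  intro Γf φ h
  induction h with
  | @hyp Γ φ hmem =>
    by_cases hδ : φ ∈ Δ
    · exact ND.reiterate Set.subset_union_right (hg _ hδ)
    · exact ND.hyp (Or.inl ⟨hmem, hδ⟩)
  | reiterate hsub _ ih =>
    exact ND.reiterate (Set.union_subset_union_left _ (Set.diff_subset_diff_left hsub)) ih
  | notI _ ih => exact ND.notI (ND.reiterate (hins _ _) ih)
  | notE _ ih => exact ND.notE ih
  | botI _ _ ih1 ih2 => exact ND.botI ih1 ih2
  | andI _ _ ih1 ih2 => exact ND.andI ih1 ih2
  | andE₁ _ ih => exact ND.andE₁ ih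
  | andE₂ _ ih => exact ND.andE₂ ih
  | orI₁ _ ih => exact ND.orI₁ ih
  | orI₂ _ ih => exact ND.orI₂ ih
  | orE _ _ _ ih1 ih2 ih3 => exact ND.orE ih1 ih2 ih3
  | impI _ ih => exact ND.impI (ND.reiterate (hins _ _) ih)
  | impE _ _ ih1 ih2 => exact ND.impE ih1 ih2
  | iffI _ _ ih1 ih2 => exact ND.iffI ih1 ih2
  | iffE₁ _ ih => exact ND.iffE₁ ih
  | iffE₂ _ ih => exact ND.iffE₂ ih
  | @allI Γ ψ x hfresh hfresh2 _ ih =>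
    refine ND.allI ?_ hfresh2 ih
    rintro γ (⟨hγ, -⟩ | hγ)
    · exact hfresh γ hγ
    · exact hclosed γ hγ x
  | allE t _ ih => exact ND.allE t ih
  | exI t _ ih => exact ND.exI t ih
  | @exE Γ χ ψ x hfresh h1 h2 _ _ ih1 ih2 =>
    refine ND.exE ?_ h1 h2 ih1 (ND.reiterate (hins _ _) ih2)
    rintro γ (⟨hγ, -⟩ | hγ)
    · exact hfresh γ hγ
    · exact hclosed γ hγ x
  | eqRefl t => exact ND.eqRefl t
  | eqSubst _ _ ih1 ih2 => exact ND.eqSubst ih1 ih2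

variable {Tm : Set L.Sentence}

theorem mem_sderiv {A : L.Sentence} (h : A ∈ Tm) : SDeriv Tm A :=
  ND.hyp ⟨A, h, rfl⟩

/-- Cut at the level of sentence derivability. -/
theorem sderiv_trans {T T' : Set L.Sentence} (h : ∀ C ∈ T', SDeriv T C) {B : L.Sentence}
    (hB : SDeriv T' B) : SDeriv T B := by
  have hc := nd_cut (Δ := sentenceToFormula '' T') (Γg := sentenceToFormula '' T)
    (by rintro δ ⟨C, hC, rfl⟩; exact h C hC)
    (by rintro γ ⟨C, -, rfl⟩ x; exact stf_closed C x) hB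
  refine ND.reiterate ?_ hc
  rw [Set.diff_self, Set.empty_union]

theorem sderiv_insert {A C : L.Sentence} (h : C ∈ insert A Tm) : SDeriv (insert A Tm) C :=
  mem_sderiv h

/-- Negation completeness of a maximally consistent theory. -/
theorem sderiv_not_of_not_sderiv (hmax : MaximallyConsistent Tm) {A : L.Sentence}
    (hA : ¬ SDeriv Tm A) : SDeriv Tm (∼A) := by
  set T' : Set L.Sentence := {B | SDeriv (insert A Tm) B} with hT'
  have hth : IsTheory T' := by
    intro B hB
    exact sderiv_trans (fun C hC => hC) hB
  have hsub : Tm ⊆ T' := fun C hC => mem_sderiv (Set.mem_insert_of_mem _ hC)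
  have hAT : A ∈ T' := mem_sderiv (Set.mem_insert _ _)
  have hAnotin : A ∉ Tm := fun h => hA (mem_sderiv h)
  have hss : Tm ⊂ T' := ⟨hsub, fun h => hAnotin (h hAT)⟩
  have hincons := hmax.2.2 T' hth hss
  have hbot : SDeriv T' (⊥ : L.Sentence) := Classical.byContradiction fun h => hincons h
  have hbot2 : SDeriv (insert A Tm) (⊥ : L.Sentence) := sderiv_trans (fun C hC => hC) hbot
  have hbot3 : ND (insert (sentenceToFormula A) (sentenceToFormula '' Tm))
      (⊥ : L.Formula ℕ) := by
    have h' : ND (sentenceToFormula '' (insert A Tm)) (sentenceToFormula (⊥ : L.Sentence)) :=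
      hbot2
    rw [Set.image_insert_eq, stf_falsum] at h'
    exact h'
  show ND _ (sentenceToFormula (∼A))
  rw [stf_not]
  exact ND.notI hbot3

theorem sderiv_absurd (hmax : MaximallyConsistent Tm) {A : L.Sentence}
    (h1 : SDeriv Tm A) (h2 : SDeriv Tm (∼A)) : False := by
  have h2' : ND (sentenceToFormula '' Tm) (∼(sentenceToFormula A)) := by
    have h' : ND (sentenceToFormula '' Tm) (sentenceToFormula (∼A)) := h2
    rwa [stf_not] at h'
  refine hmax.2.1 ?_
  show ND _ (sentenceToFormula (⊥ : L.Sentence))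
  rw [stf_falsum]
  exact ND.botI h1 h2'

theorem sderiv_imp_iff (hmax : MaximallyConsistent Tm) {A B : L.Sentence} :
    SDeriv Tm (A.imp B) ↔ (SDeriv Tm A → SDeriv Tm B) := by
  constructor
  · intro h hA
    have h' : ND (sentenceToFormula '' Tm)
        ((sentenceToFormula A).imp (sentenceToFormula B)) := by
      have h'' : ND (sentenceToFormula '' Tm) (sentenceToFormula (A.imp B)) := h
      rwa [stf_imp] at h''
    exact ND.impE h' hA
  · intro h
    show ND _ (sentenceToFormula (A.imp B))
    rw [stf_imp]
    by_cases hA : SDeriv Tm A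
    · exact ND.impI (ND.reiterate (Set.subset_insert _ _) (h hA))
    · have hnA := sderiv_not_of_not_sderiv hmax hA
      have hnA' : ND (sentenceToFormula '' Tm) (∼(sentenceToFormula A)) := by
        have h' : ND (sentenceToFormula '' Tm) (sentenceToFormula (∼A)) := hnA
        rwa [stf_not] at h'
      refine ND.impI (botE (ND.botI (ND.hyp (Set.mem_insert _ _)) ?_))
      exact ND.reiterate (Set.subset_insert _ _) hnA'

theorem sderiv_eqRefl (t : L.Term Empty) : SDeriv Tm (Term.equal t t) := by
  show ND _ (sentenceToFormula _)
  rw [stf_equal]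
  exact ND.eqRefl _

theorem sderiv_eqSubst {t s : L.Term Empty} (ψ : L.BoundedFormula Empty 1)
    (he : SDeriv Tm (Term.equal t s)) (h : SDeriv Tm (instS ψ t)) :
    SDeriv Tm (instS ψ s) := by
  have he' : ND (sentenceToFormula '' Tm)
      (Term.equal (t.relabel Empty.elim) (s.relabel Empty.elim)) := by
    have h' : ND (sentenceToFormula '' Tm) (sentenceToFormula (Term.equal t s)) := he
    rwa [stf_equal] at h'
  have h1 : ND (sentenceToFormula '' Tm) (inst (nfb ψ) (t.relabel Empty.elim)) := by
    have h' : ND (sentenceToFormula '' Tm) (sentenceToFormula (instS ψ t)) := h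
    rwa [stf_instS] at h'
  have h2 := ND.eqSubst he' h1
  show ND _ (sentenceToFormula _)
  rw [stf_instS]
  exact h2

/-- The universal quantifier is equivalent to all closed-term instances
(using maximality and the Henkin property). -/
theorem sderiv_all_iff (hmax : MaximallyConsistent Tm)
    (hHenkin : ∀ φ : L.BoundedFormula Empty 1,
      ∃ c : L.Constants, ((∃'φ) ⟹ instS φ c.term) ∈ Tm)
    (χ : L.BoundedFormula Empty 1) :
    SDeriv Tm (∀'χ) ↔ ∀ t : L.Term Empty, SDeriv Tm (instS χ t) := by
  constructor
  · intro h t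
    have h' : ND (sentenceToFormula '' Tm) (∀'(nfb χ)) := by
      have h'' : ND (sentenceToFormula '' Tm) (sentenceToFormula (∀'χ)) := h
      rwa [stf_all] at h''
    have h2 := ND.allE (t.relabel Empty.elim) h'
    show ND _ (sentenceToFormula _)
    rw [stf_instS]
    exact h2
  · intro h
    by_contra hno
    have hnot := sderiv_not_of_not_sderiv hmax hno
    obtain ⟨c, hc⟩ := hHenkin (∼χ)
    -- first derive the existential
    have hex : SDeriv Tm (∃'(∼χ)) := by
      show ND _ (sentenceToFormula (∼(∀'(∼∼χ))))
      rw [stf_not, stf_all]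
      apply ND.notI
      have hin : ND (insert (∀'(nfb (∼∼χ))) (sentenceToFormula '' Tm)) (∀'(nfb (∼∼χ))) :=
        ND.hyp (Set.mem_insert _ _)
      have h2 := ND.allE (Term.var 0) hin
      have h3 : ND (insert (∀'(nfb (∼∼χ))) (sentenceToFormula '' Tm))
          (inst (nfb χ) (Term.var 0)) := by
        have : nfb (∼∼χ) = ∼∼(nfb χ) := rfl
        rw [this] at h2
        rw [inst_not, inst_not] at h2
        exact ND.notE h2
      have h4 : ND (insert (∀'(nfb (∼∼χ))) (sentenceToFormula '' Tm)) (∀'(nfb χ)) := by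
        refine ND.allI (x := 0) ?_ ?_ h3
        · rintro γ (rfl | ⟨C, -, rfl⟩)
          · rw [show (∀'(nfb (∼∼χ))) = sentenceToFormula (∀'(∼∼χ)) from (stf_all _).symm]
            exact stf_closed _ 0
          · exact stf_closed C 0
        · rw [show (∀'(nfb χ)) = sentenceToFormula (∀'χ) from (stf_all _).symm]
          exact stf_closed _ 0
      have h5 : ND (insert (∀'(nfb (∼∼χ))) (sentenceToFormula '' Tm)) (∼(∀'(nfb χ))) := by
        refine ND.reiterate (Set.subset_insert _ _) ?_
        have h' : ND (sentenceToFormula '' Tm) (sentenceToFormula (∼(∀'χ))) := hnot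
        rwa [stf_not, stf_all] at h'
      exact ND.botI h4 h5
    have himp := mem_sderiv hc
    have hwit : SDeriv Tm (instS (∼χ) c.term) := (sderiv_imp_iff hmax).1 himp hex
    rw [instS_not] at hwit
    exact sderiv_absurd hmax (h c.term) hwit

end NDLayer
section Model

open FirstOrder FirstOrder.Language FirstOrder.Language.BoundedFormula

variable {L : FirstOrder.Language.{u, v}}

/-! ### instantiation computations for atomic patterns -/

/-- The instantiating substitution used by `instS`. -/
def isub (t : L.Term Empty) : Empty ⊕ Fin 1 → L.Term (Empty ⊕ Fin 0) := fun x =>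
  ((Sum.elim Term.var (fun _ => t) : Empty ⊕ Fin 1 → L.Term Empty) x).relabel Sum.inl

theorem instS_eq_bsub' (χ : L.BoundedFormula Empty 1) (t : L.Term Empty) :
    instS χ t = bsub χ (isub t) := instS_eq_bsub χ t

/-- One-hole term vector. -/
def hole {m : ℕ} (w : Fin m → L.Term Empty) (j : Fin m) : Fin m → L.Term (Empty ⊕ Fin 1) :=
  fun i => if i = j then Term.var (Sum.inr 0) else (w i).relabel Sum.inl

theorem subst_hole {m : ℕ} (w : Fin m → L.Term Empty) (j : Fin m) (s : L.Term Empty)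
    (i : Fin m) :
    (hole w j i).subst (isub s) = ((Function.update w j s) i).relabel Sum.inl := by
  by_cases hi : i = j
  · subst hi
    rw [hole, if_pos rfl, Function.update_self]
    rfl
  · rw [hole, if_neg hi, Function.update_of_ne hi, term_subst_relabel,
      closed_term_subst (w i) _ Sum.inl]

variable {Tm : Set L.Sentence}

/-- Transport derivability along coordinatewise provable equalities. -/
theorem sderiv_transport {m : ℕ} (us ws : Fin m → L.Term Empty)
    (h : ∀ i, SDeriv Tm (Term.equal (us i) (ws i)))
    (Ψ : (Fin m → L.Term Empty) → Fin m → L.BoundedFormula Empty 1)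
    (P : (Fin m → L.Term Empty) → L.Sentence)
    (hΨ : ∀ w j s, instS (Ψ w j) s = P (Function.update w j s))
    (hbase : SDeriv Tm (P us)) : SDeriv Tm (P ws) := by
  classical
  have h0 : (fun i : Fin m => if (i : ℕ) < 0 then ws i else us i) = us :=
    funext fun i => by simp
  have hm : (fun i : Fin m => if (i : ℕ) < m then ws i else us i) = ws :=
    funext fun i => by simp [i.isLt]
  have main : ∀ j, j ≤ m →
      SDeriv Tm (P (fun i => if (i : ℕ) < j then ws i else us i)) := by
    intro j
    induction j with
    | zero => intro _; rwa [h0]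
    | succ j ih =>
      intro hj
      have hjm : j < m := hj
      have hstep := ih (le_of_lt hjm)
      set jF : Fin m := ⟨j, hjm⟩ with hjF
      set mixj : Fin m → L.Term Empty := fun i => if (i : ℕ) < j then ws i else us i
        with hmixj
      have e1 : mixj = Function.update mixj jF (us jF) := by
        funext i
        by_cases hi : i = jF
        · subst hi; simp [hmixj, hjF, Function.update_self]
        · rw [Function.update_of_ne hi]
      have e2 : (fun i : Fin m => if (i : ℕ) < j + 1 then ws i else us i)
          = Function.update mixj jF (ws jF) := by
        funext i
        by_cases hi : i = jF
        · subst hi; simp [hjF, Function.update_self]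
        · rw [Function.update_of_ne hi]
          have hne : (i : ℕ) ≠ j := fun hh => hi (Fin.ext hh)
          simp only [hmixj]
          by_cases hlt : (i : ℕ) < j
          · rw [if_pos hlt, if_pos (by omega)]
          · rw [if_neg hlt, if_neg (by omega)]
      have hψt : SDeriv Tm (instS (Ψ mixj jF) (us jF)) := by
        rw [hΨ, ← e1]; exact hstep
      have hres := sderiv_eqSubst (Ψ mixj jF) (h jF) hψt
      rw [hΨ, ← e2] at hres
      exact hres
  have := main m le_rfl
  rwa [hm] at this

theorem sderiv_func_congr {m : ℕ} (f : L.Functions m) (us ws : Fin m → L.Term Empty)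
    (h : ∀ i, SDeriv Tm (Term.equal (us i) (ws i))) :
    SDeriv Tm (Term.equal (Term.func f us) (Term.func f ws)) := by
  refine sderiv_transport us ws h
    (fun w j => BoundedFormula.equal ((Term.func f us).relabel Sum.inl)
      (Term.func f (hole w j)))
    (fun w => Term.equal (Term.func f us) (Term.func f w)) ?_ (sderiv_eqRefl _)
  intro w j s
  rw [instS_eq_bsub']
  show BoundedFormula.equal (((Term.func f us).relabel Sum.inl).subst (isub s))
      ((Term.func f (hole w j)).subst (isub s)) = _
  rw [term_subst_relabel, closed_term_subst (Term.func f us) _ Sum.inl]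
  show BoundedFormula.equal _ (Term.func f fun i => (hole w j i).subst (isub s)) = _
  rw [funext fun i => subst_hole w j s i]
  rfl

theorem sderiv_rel_congr {m : ℕ} (R : L.Relations m) (us ws : Fin m → L.Term Empty)
    (h : ∀ i, SDeriv Tm (Term.equal (us i) (ws i)))
    (hR : SDeriv Tm (BoundedFormula.rel R (fun i => (us i).relabel Sum.inl))) :
    SDeriv Tm (BoundedFormula.rel R (fun i => (ws i).relabel Sum.inl)) := by
  refine sderiv_transport us ws h (fun w j => BoundedFormula.rel R (hole w j))
    (fun w => BoundedFormula.rel R (fun i => (w i).relabel Sum.inl)) ?_ hR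
  intro w j s
  rw [instS_eq_bsub']
  show BoundedFormula.rel R (fun i => (hole w j i).subst (isub s)) = _
  rw [funext fun i => subst_hole w j s i]

/-! ### The term model -/

/-- Provable equality of closed terms. -/
def termSetoid (Tm : Set L.Sentence) (hmax : MaximallyConsistent Tm) :
    Setoid (L.Term Empty) where
  r t u := SDeriv Tm (Term.equal t u)
  iseqv := by
    constructor
    · exact fun t => sderiv_eqRefl t
    · intro t u h
      have h1 : SDeriv Tm (instS (BoundedFormula.equal
          (Term.var (Sum.inr 0)) (t.relabel Sum.inl)) t) := by
        rw [instS_eq_bsub']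
        show SDeriv Tm (BoundedFormula.equal ((Term.var (Sum.inr 0)).subst (isub t))
          ((t.relabel Sum.inl).subst (isub t)))
        rw [term_subst_relabel, closed_term_subst t _ Sum.inl]
        exact sderiv_eqRefl t
      have h2 := sderiv_eqSubst _ h h1
      rw [instS_eq_bsub'] at h2
      revert h2
      show SDeriv Tm (BoundedFormula.equal ((Term.var (Sum.inr 0)).subst (isub u))
        ((t.relabel Sum.inl).subst (isub u))) → _
      rw [term_subst_relabel, closed_term_subst t _ Sum.inl]
      exact fun h2 => h2
    · intro t u w h1 h2
      have h3 : SDeriv Tm (instS (BoundedFormula.equal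
          (t.relabel Sum.inl) (Term.var (Sum.inr 0))) u) := by
        rw [instS_eq_bsub']
        show SDeriv Tm (BoundedFormula.equal ((t.relabel Sum.inl).subst (isub u))
          ((Term.var (Sum.inr 0)).subst (isub u)))
        rw [term_subst_relabel, closed_term_subst t _ Sum.inl]
        exact h1
      have h4 := sderiv_eqSubst _ h2 h3
      rw [instS_eq_bsub'] at h4
      revert h4
      show SDeriv Tm (BoundedFormula.equal ((t.relabel Sum.inl).subst (isub w))
        ((Term.var (Sum.inr 0)).subst (isub w))) → _
      rw [term_subst_relabel, closed_term_subst t _ Sum.inl]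
      exact fun h4 => h4

variable (Tm) (hmax : MaximallyConsistent Tm)

/-- The carrier of the term model. -/
def Carrier : Type (max u v) := ULift.{v} (Quotient (termSetoid Tm hmax))

/-- Embedding of closed terms into the carrier. -/
def emb (t : L.Term Empty) : Carrier Tm hmax := ULift.up (Quotient.mk _ t)

/-- Representative of an element of the carrier. -/
noncomputable def rep (a : Carrier Tm hmax) : L.Term Empty := a.down.out

theorem emb_rep (a : Carrier Tm hmax) : emb Tm hmax (rep Tm hmax a) = a := by
  refine congrArg ULift.up ?_
  exact Quotient.out_eq a.down

theorem rep_emb_rel (t : L.Term Empty) :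
    SDeriv Tm (Term.equal (rep Tm hmax (emb Tm hmax t)) t) :=
  @Quotient.mk_out _ (termSetoid Tm hmax) t

theorem emb_eq_iff (t u : L.Term Empty) :
    emb Tm hmax t = emb Tm hmax u ↔ SDeriv Tm (Term.equal t u) := by
  constructor
  · intro h
    exact Quotient.exact (congrArg ULift.down h)
  · intro h
    exact congrArg ULift.up (Quotient.sound h)

/-- The term-model structure. -/
noncomputable def TStruct : L.Structure (Carrier Tm hmax) where
  funMap := fun {n} f as => emb Tm hmax (Term.func f (fun i => rep Tm hmax (as i)))
  RelMap := fun {n} R as =>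
    SDeriv Tm (BoundedFormula.rel R (fun i => (rep Tm hmax (as i)).relabel Sum.inl))

theorem realize_term {n : ℕ} (t : L.Term (Empty ⊕ Fin n)) (v : Fin n → L.Term Empty) :
    @Term.realize L (Carrier Tm hmax) (TStruct Tm hmax) _
      (Sum.elim (fun e : Empty => e.elim) (fun i => emb Tm hmax (v i))) t
      = emb Tm hmax (t.subst (Sum.elim Term.var v)) := by
  induction t with
  | var z =>
    cases z with
    | inl e => exact e.elim
    | inr i => rfl
  | func f ts ih =>
    show emb Tm hmax (Term.func f (fun i => rep Tm hmax
      (@Term.realize L (Carrier Tm hmax) (TStruct Tm hmax) _ _ (ts i)))) = _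
    rw [(emb_eq_iff Tm hmax _ _)]
    refine sderiv_func_congr f _ _ (fun i => ?_)
    rw [ih i]
    exact rep_emb_rel Tm hmax _

theorem msub_decomp {n : ℕ} (t : L.Term (Empty ⊕ Fin n)) (v : Fin n → L.Term Empty) :
    t.subst (Sum.elim (fun e : Empty => e.elim)
        (fun i => ((v i).relabel Sum.inl : L.Term (Empty ⊕ Fin 0))))
      = ((t.subst (Sum.elim Term.var v)).relabel Sum.inl : L.Term (Empty ⊕ Fin 0)) := by
  rw [term_relabel_subst]
  refine term_subst_congr t (fun y => ?_)
  cases y with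
  | inl e => exact e.elim
  | inr i => rfl

/-- The composed substitution identity for the `all` case. -/
theorem inst_chi (φ : L.BoundedFormula Empty (n + 1)) (v : Fin n → L.Term Empty)
    (t : L.Term Empty) :
    instS (bsub φ (liftSub
        (Sum.elim (fun e : Empty => e.elim) (fun i => (v i).relabel Sum.inl)))) t
      = bsub φ (Sum.elim (fun e : Empty => e.elim)
          (fun i => ((Fin.snoc v t : Fin (n+1) → L.Term Empty) i).relabel Sum.inl)) := by
  rw [instS_eq_bsub', bsub_bsub]
  refine bsub_congr φ (funext fun x => ?_)
  cases x with
  | inl e => exact e.elim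
  | inr i =>
    refine Fin.lastCases ?_ (fun i₀ => ?_) i
    · rw [Sum.elim_inr, liftSub_snoc_last, Fin.snoc_last]
      rfl
    · rw [Sum.elim_inr, liftSub_snoc_castSucc, Sum.elim_inr, term_subst_relabel,
        Fin.snoc_castSucc, term_subst_relabel,
        closed_term_subst (v i₀) _ Sum.inl]

/-- **Truth lemma** for the term model. -/
theorem truth (hHenkin : ∀ φ : L.BoundedFormula Empty 1,
      ∃ c : L.Constants, ((∃'φ) ⟹ instS φ c.term) ∈ Tm) :
    ∀ {n : ℕ} (φ : L.BoundedFormula Empty n) (v : Fin n → L.Term Empty),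
    @BoundedFormula.Realize L (Carrier Tm hmax) (TStruct Tm hmax) _ _ φ
        (fun e => e.elim) (fun i => emb Tm hmax (v i)) ↔
      SDeriv Tm (bsub φ
        (Sum.elim (fun e : Empty => e.elim) (fun i => (v i).relabel Sum.inl)))
  | _, .falsum, v => by
    constructor
    · intro h; exact h.elim
    · intro h; exact (hmax.2.1 h).elim
  | _, .equal t₁ t₂, v => by
    show (@Term.realize L (Carrier Tm hmax) (TStruct Tm hmax) _ _ t₁
      = @Term.realize L (Carrier Tm hmax) (TStruct Tm hmax) _ _ t₂) ↔ _
    rw [realize_term, realize_term, emb_eq_iff]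
    show _ ↔ SDeriv Tm (BoundedFormula.equal _ _)
    rw [msub_decomp, msub_decomp]
    exact Iff.rfl
  | _, .rel R ts, v => by
    show SDeriv Tm (BoundedFormula.rel R (fun i => (rep Tm hmax
        (@Term.realize L (Carrier Tm hmax) (TStruct Tm hmax) _ _ (ts i))).relabel Sum.inl))
      ↔ _
    show _ ↔ SDeriv Tm (BoundedFormula.rel R (fun i => (ts i).subst _))
    rw [show (fun i => ((ts i).subst (Sum.elim (fun e : Empty => e.elim)
        (fun i => (v i).relabel Sum.inl)))) = fun i =>
        ((ts i).subst (Sum.elim Term.var v)).relabel Sum.inl from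
      funext fun i => msub_decomp (ts i) v]
    constructor
    · intro h
      refine sderiv_rel_congr R _ _ (fun i => ?_) h
      rw [realize_term]
      exact rep_emb_rel Tm hmax _
    · intro h
      refine sderiv_rel_congr R _ _ (fun i => ?_) h
      rw [realize_term]
      have := rep_emb_rel Tm hmax ((ts i).subst (Sum.elim Term.var v))
      exact (termSetoid Tm hmax).symm this
  | _, .imp φ ψ, v => by
    show ((@BoundedFormula.Realize L (Carrier Tm hmax) (TStruct Tm hmax) _ _ φ _ _) →
      (@BoundedFormula.Realize L (Carrier Tm hmax) (TStruct Tm hmax) _ _ ψ _ _)) ↔ _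
    rw [truth hHenkin φ v, truth hHenkin ψ v]
    exact (sderiv_imp_iff hmax).symm
  | _, .all φ, v => by
    show (∀ a : Carrier Tm hmax, @BoundedFormula.Realize L (Carrier Tm hmax)
        (TStruct Tm hmax) _ _ φ (fun e => e.elim)
        (Fin.snoc (fun i => emb Tm hmax (v i)) a)) ↔ _
    have hsnoc : ∀ (t : L.Term Empty),
        (Fin.snoc (fun i => emb Tm hmax (v i)) (emb Tm hmax t) : Fin _ → Carrier Tm hmax)
          = fun i => emb Tm hmax ((Fin.snoc v t : Fin _ → L.Term Empty) i) := by
      intro t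
      funext i
      refine Fin.lastCases ?_ (fun i₀ => ?_) i
      · rw [Fin.snoc_last, Fin.snoc_last]
      · rw [Fin.snoc_castSucc, Fin.snoc_castSucc]
    constructor
    · intro h
      show SDeriv Tm (∀' (bsub φ (liftSub _)))
      rw [sderiv_all_iff hmax hHenkin]
      intro t
      rw [inst_chi]
      rw [← truth hHenkin φ (Fin.snoc v t), ← hsnoc t]
      exact h (emb Tm hmax t)
    · intro h a
      have ha := emb_rep Tm hmax a
      rw [← ha, hsnoc (rep Tm hmax a)]
      rw [truth hHenkin φ (Fin.snoc v (rep Tm hmax a)), ← inst_chi]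
      have h' : SDeriv Tm (∀' (bsub φ (liftSub _))) := h
      rw [sderiv_all_iff hmax hHenkin] at h'
      exact h' _

end Model
/-- **Canonical (term) model theorem.** Let `T_m` be a maximally consistent
theory with the Henkin witness property.  Then there is an `L`-structure `𝔄`
such that for every sentence `α`, `𝔄 ⊨ α` if and only if `T_m ⊢ α`. -/
theorem canonical_model {L : FirstOrder.Language.{u, v}}
    (Tm : Set L.Sentence) (hmax : MaximallyConsistent Tm)
    (hHenkin : ∀ φ : L.BoundedFormula Empty 1,
      ∃ c : L.Constants, ((∃'φ) ⟹ instS φ c.term) ∈ Tm) :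
    ∃ (A : Type (max u v)) (S : L.Structure A), Nonempty A ∧
      ∀ α : L.Sentence, @FirstOrder.Language.Sentence.Realize L A S α ↔ SDeriv Tm α := by
  refine ⟨Carrier Tm hmax, TStruct Tm hmax, ?_, ?_⟩
  · obtain ⟨c, -⟩ := hHenkin ⊥
    exact ⟨emb Tm hmax c.term⟩
  · intro α
    have hreal : @FirstOrder.Language.Sentence.Realize L (Carrier Tm hmax)
          (TStruct Tm hmax) α
        ↔ @FirstOrder.Language.BoundedFormula.Realize L (Carrier Tm hmax)
          (TStruct Tm hmax) Empty 0 α (fun e => e.elim)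
          (fun i => emb Tm hmax (Fin.elim0 i)) := by
      show @FirstOrder.Language.BoundedFormula.Realize L (Carrier Tm hmax)
          (TStruct Tm hmax) Empty 0 α default default ↔ _
      rw [show (default : Empty → Carrier Tm hmax) = (fun e => e.elim) from
          funext fun e => e.elim,
        show (default : Fin 0 → Carrier Tm hmax)
            = (fun i : Fin 0 => emb Tm hmax (Fin.elim0 i)) from funext fun i => i.elim0]
    rw [hreal, truth Tm hmax hHenkin α (fun i => Fin.elim0 i),
      show bsub α (Sum.elim (fun e : Empty => e.elim)
          (fun i => ((Fin.elim0 i : L.Term Empty)).relabel Sum.inl)) = α from by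
        rw [bsub_congr α (empty_fin0_map_eq _ Term.var)]; exact bsub_var α]

end NDFOL
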